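/- Let G be a weakly K^d_{p_1,...,p_d}-saturated d-uniform d-partite hypergraph with classes V_1,...,V_d of size n, with saturation process e_1,...,e_h and created copies C_1,...,C_h. Setting A_i = V(G) \ V(C_i), the families A_1,...,A_h and e_1,...,e_h satisfy: A_i ∩ e_i = ∅ for all i; A_i ∩ e_j ≠ ∅ for all i < j; |e_i ∩ V_j| = 1 for all i,j; and for each i there is a permutation π of [d] with |A_i ∩ V_j| = n − p_{π(j)} for all j. Consequently the number of edges of G is at least n^d − Q(n−p_1,...,n−p_d,1,...,1). -/

import Mathlib

/-- The classes `S_1,…,S_d` span a copy of `K^d_{p_1,…,p_d}` in some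
orientation: for some permutation `π`, `|S_i| = p_{π(i)}`. -/
def IsBox {n d : ℕ} (p : Fin d → ℕ) (S : Fin d → Finset (Fin n)) : Prop :=
  ∃ π : Equiv.Perm (Fin d), ∀ i, (S i).card = p (π i)

/-- `Q(a_1,…,a_d,b_1,…,b_d)`: with `a = max_i a_i` and disjoint sets
`U_i = {i} × [a+b_i]`, the number of sets `S ⊆ U_1 ∪ … ∪ U_d` for which
there is a permutation `π` of `[d]` such that `S ∩ U_i` is a subset of
`[a_{π(i)} + b_i]` of size `b_i`, for every `i`. -/
def QQ (d : ℕ) (a b : Fin d → ℕ) : ℕ :=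
  (((Finset.univ : Finset (Fin d)).biUnion fun i =>
      (Finset.Icc 1 (Finset.univ.sup a + b i)).image fun x => (i, x)).powerset.filter
    fun S => ∃ π : Equiv.Perm (Fin d), ∀ i,
      ((S.filter fun u => u.1 = i).image Prod.snd ⊆ Finset.Icc 1 (a (π i) + b i)) ∧
      (S.filter fun u => u.1 = i).card = b i).card

/-- The vertices of the `j`-th vertex class, as a subset of the vertex set
`Fin d × Fin n` of a `d`-partite hypergraph with `n` vertices per class. -/
def classV (n d : ℕ) (j : Fin d) : Finset (Fin d × Fin n) :=
  Finset.univ.filter fun u => u.1 = j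

/-- The vertex set of the copy spanned by the classes `S_1,…,S_d`. -/
def copyVerts {n d : ℕ} (S : Fin d → Finset (Fin n)) : Finset (Fin d × Fin n) :=
  (Finset.univ : Finset (Fin d)).biUnion fun j => (S j).image fun x => (j, x)

/-- The vertex set of an edge `e ∈ V_1 × ⋯ × V_d`. -/
def edgeVerts {n d : ℕ} (e : Fin d → Fin n) : Finset (Fin d × Fin n) :=
  (Finset.univ : Finset (Fin d)).image fun j => (j, e j)

open Finset

lemma mem_copyVerts {n d : ℕ} (S : Fin d → Finset (Fin n)) (a : Fin d) (b : Fin n) :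
    (a, b) ∈ copyVerts S ↔ b ∈ S a := by
  simp only [copyVerts, mem_biUnion, mem_image, mem_univ, true_and, Prod.mk.injEq]
  constructor
  · rintro ⟨j, x, hx, rfl, rfl⟩; exact hx
  · intro h; exact ⟨a, b, h, rfl, rfl⟩

lemma mem_edgeVerts {n d : ℕ} (e : Fin d → Fin n) (a : Fin d) (b : Fin n) :
    (a, b) ∈ edgeVerts e ↔ e a = b := by
  simp only [edgeVerts, mem_image, mem_univ, true_and, Prod.mk.injEq]
  constructor
  · rintro ⟨j, rfl, rfl⟩; rfl
  · rintro rfl; exact ⟨a, rfl, rfl⟩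

lemma mem_classV {n d : ℕ} (j a : Fin d) (b : Fin n) :
    (a, b) ∈ classV n d j ↔ a = j := by simp [classV]

/-- Triangular family of functions is linearly independent. -/
lemma li_triangular {F α ι : Type*} [Field F] [LinearOrder ι]
    (v : ι → α → F) (pts : ι → α)
    (hd : ∀ k, v k (pts k) ≠ 0)
    (hu : ∀ k k', k < k' → v k (pts k') = 0) :
    LinearIndependent F v := by
  classical
  rw [linearIndependent_iff']
  intro s g hsum i hi
  by_contra hgi
  have hne : (s.filter fun j => g j ≠ 0).Nonempty := ⟨i, by simp [hi, hgi]⟩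
  set t := s.filter fun j => g j ≠ 0 with ht
  set k0 := t.max' hne with hk0
  have hk0t : k0 ∈ t := t.max'_mem hne
  have hk0s : k0 ∈ s := (mem_filter.mp hk0t).1
  have hgk0 : g k0 ≠ 0 := (mem_filter.mp hk0t).2
  have happ : ∑ j ∈ s, g j * v j (pts k0) = 0 := by
    have := congrFun hsum (pts k0)
    simpa using this
  have hsingle : ∑ j ∈ s, g j * v j (pts k0) = g k0 * v k0 (pts k0) := by
    refine Finset.sum_eq_single_of_mem k0 hk0s ?_
    intro j hj hne'
    rcases lt_or_gt_of_ne hne' with h | h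
    · rw [hu j k0 h, mul_zero]
    · have hg : g j = 0 := by
        by_contra hg
        exact absurd (t.le_max' j (mem_filter.mpr ⟨hj, hg⟩)) (not_le.mpr h)
      rw [hg, zero_mul]
  rw [hsingle] at happ
  exact hgk0 ((mul_eq_zero.mp happ).resolve_right (hd k0))

lemma QQ_one_eq (d : ℕ) (a : Fin d → ℕ) :
    ((Fintype.piFinset fun _ : Fin d => Finset.range (Finset.univ.sup a + 1)).filter
        fun m : Fin d → ℕ => ∃ π : Equiv.Perm (Fin d), ∀ i, m i ≤ a (π i)).card
      = QQ d a (fun _ => 1) := by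
  classical
  unfold QQ
  refine Finset.card_bij (fun m _ => Finset.univ.image fun i => (i, m i + 1)) ?_ ?_ ?_
  · intro m hm
    simp only [mem_filter, Fintype.mem_piFinset, mem_range] at hm
    obtain ⟨hbd, π, hπ⟩ := hm
    have hfilter : ∀ i : Fin d,
        ((Finset.univ.image fun j => (j, m j + 1)).filter fun u : Fin d × ℕ => u.1 = i)
          = {(i, m i + 1)} := by
      intro i
      ext ⟨x, y⟩
      simp only [mem_filter, mem_image, mem_univ, true_and, Prod.mk.injEq, mem_singleton]
      constructor
      · rintro ⟨⟨j, hj1, hj2⟩, hx⟩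
        exact ⟨hx, by rw [← hj2, hj1, hx]⟩
      · rintro ⟨hx, hy⟩
        exact ⟨⟨i, hx.symm, hy.symm⟩, hx⟩
    rw [mem_filter, mem_powerset]
    refine ⟨?_, π, fun i => ?_⟩
    · intro u hu
      simp only [mem_image, mem_univ, true_and] at hu
      obtain ⟨j, rfl⟩ := hu
      simp only [mem_biUnion, mem_univ, true_and]
      refine ⟨j, mem_image.mpr ⟨m j + 1, ?_, rfl⟩⟩
      rw [mem_Icc]
      refine ⟨Nat.le_add_left _ _, ?_⟩
      show m j + 1 ≤ Finset.univ.sup a + 1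
      have := hbd j; omega
    · rw [hfilter i]
      refine ⟨?_, by simp⟩
      intro y hy
      simp only [image_singleton, mem_singleton] at hy
      subst hy
      rw [mem_Icc]
      refine ⟨Nat.le_add_left _ _, ?_⟩
      show m i + 1 ≤ a (π i) + 1
      have := hπ i; omega
  · intro m₁ h₁ m₂ h₂ heq
    have heq' : (Finset.univ.image fun i => (i, m₁ i + 1))
        = Finset.univ.image fun i => (i, m₂ i + 1) := heq
    funext i
    have : (i, m₁ i + 1) ∈ Finset.univ.image fun j => (j, m₂ j + 1) := by
      rw [← heq']; exact mem_image.mpr ⟨i, mem_univ _, rfl⟩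
    simp only [mem_image, mem_univ, true_and, Prod.mk.injEq] at this
    obtain ⟨j, rfl, h⟩ := this
    omega
  · intro S hS
    rw [mem_filter, mem_powerset] at hS
    obtain ⟨hsub, π, hπ⟩ := hS
    have hcard : ∀ i, (S.filter fun u => u.1 = i).card = 1 := fun i => (hπ i).2
    choose u hu using fun i => Finset.card_eq_one.mp (hcard i)
    have hu1 : ∀ i, (u i).1 = i := by
      intro i
      have : u i ∈ S.filter fun w => w.1 = i := by rw [hu i]; exact mem_singleton_self _
      exact (mem_filter.mp this).2
    have huS : ∀ i, u i ∈ S := by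
      intro i
      have : u i ∈ S.filter fun w => w.1 = i := by rw [hu i]; exact mem_singleton_self _
      exact (mem_filter.mp this).1
    have hu2 : ∀ i, 1 ≤ (u i).2 ∧ (u i).2 ≤ a (π i) + 1 := by
      intro i
      have h1 := (hπ i).1
      have hmem : (u i).2 ∈ (S.filter fun w => w.1 = i).image Prod.snd := by
        rw [hu i]; simp
      have := h1 hmem
      rw [mem_Icc] at this
      exact ⟨this.1, this.2⟩
    refine ⟨fun i => (u i).2 - 1, ?_, ?_⟩
    · rw [mem_filter]
      constructor
      · rw [Fintype.mem_piFinset]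
        intro i
        rw [mem_range]
        show (u i).2 - 1 < Finset.univ.sup a + 1
        have h2 := (hu2 i).2
        have hle : a (π i) ≤ Finset.univ.sup a := Finset.le_sup (mem_univ _)
        omega
      · refine ⟨π, fun i => ?_⟩
        show (u i).2 - 1 ≤ a (π i)
        have := (hu2 i).2; omega
    · ext ⟨x, y⟩
      simp only [mem_image, mem_univ, true_and, Prod.mk.injEq]
      constructor
      · rintro ⟨j, rfl, rfl⟩
        have h1 := (hu2 j).1
        have e1 : (u j).2 - 1 + 1 = (u j).2 := by omega
        rw [e1]
        have e2 : (j, (u j).2) = u j := Prod.ext (hu1 j).symm rfl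
        rw [e2]; exact huS j
      · intro hxy
        refine ⟨x, rfl, ?_⟩
        have hx : (x, y) ∈ S.filter fun w => w.1 = x := mem_filter.mpr ⟨hxy, rfl⟩
        rw [hu x, mem_singleton] at hx
        have h1 := (hu2 x).1
        have hy : y = (u x).2 := by rw [← hx]
        omega

/-- If `G` (with edge set `E`) has a saturation process `e_1,…,e_h` (the list
`l` of its non-edges) with created copies `C_1,…,C_h`, then the sets
`A_i = V(G) \ V(C_i)` together with the edges `e_i` satisfy the conditions of
the undirected two-families theorem, and consequently
`|E| ≥ n^d − Q(n−p_1,…,n−p_d,1,…,1)`. -/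
theorem saturation_to_two_families (n d : ℕ) (p : Fin d → ℕ)
    (hmono : Monotone p) (hp1 : ∀ i, 1 ≤ p i) (hpn : ∀ i, p i ≤ n)
    (E : Finset (Fin d → Fin n)) (l : List (Fin d → Fin n)) (hnd : l.Nodup)
    (henum : ∀ e, e ∈ l ↔ e ∉ E)
    (C : Fin l.length → Fin d → Finset (Fin n))
    (hbox : ∀ k, IsBox p (C k))
    (hmem : ∀ k, l.get k ∈ Fintype.piFinset (C k))
    (hsub : ∀ k : Fin l.length,
      Fintype.piFinset (C k) ⊆ E ∪ (l.take (k.val + 1)).toFinset) :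
    (∀ k, (Finset.univ \ copyVerts (C k)) ∩ edgeVerts (l.get k) = ∅) ∧
    (∀ k k' : Fin l.length, k < k' →
      ((Finset.univ \ copyVerts (C k)) ∩ edgeVerts (l.get k')).Nonempty) ∧
    (∀ k j, (edgeVerts (l.get k) ∩ classV n d j).card = 1) ∧
    (∀ k, ∃ π : Equiv.Perm (Fin d), ∀ j,
      ((Finset.univ \ copyVerts (C k)) ∩ classV n d j).card = n - p (π j)) ∧
    n ^ d - QQ d (fun i => n - p i) (fun _ => 1) ≤ E.card := by

  classical
  -- later edges are outside earlier boxes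
  have hnotin : ∀ k k' : Fin l.length, k < k' → l.get k' ∉ Fintype.piFinset (C k) := by
    intro k k' hkk' hin
    have h1 := hsub k hin
    rw [Finset.mem_union] at h1
    rcases h1 with h1 | h1
    · exact (henum (l.get k')).mp (l.get_mem _) h1
    · rw [List.mem_toFinset, List.mem_iff_getElem] at h1
      obtain ⟨j, hj, hjeq⟩ := h1
      rw [List.getElem_take] at hjeq
      have hjlen : j < l.length := by
        have := hj
        simp only [List.length_take] at this
        omega
      have hjk : j < k.val + 1 := by
        have := hj
        simp only [List.length_take] at this
        omega
      have : j = k'.val := by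
        have := (List.Nodup.getElem_inj_iff hnd (hi := hjlen) (hj := k'.isLt)).mp
          (by rw [hjeq]; rfl)
        exact this
      omega
  -- Conjunct 1
  have conj1 : ∀ k, (Finset.univ \ copyVerts (C k)) ∩ edgeVerts (l.get k) = ∅ := by
    intro k
    rw [Finset.eq_empty_iff_forall_notMem]
    rintro ⟨a, b⟩ hab
    rw [Finset.mem_inter, Finset.mem_sdiff, mem_copyVerts, mem_edgeVerts] at hab
    obtain ⟨⟨-, h1⟩, h2⟩ := hab
    apply h1
    rw [← h2]
    exact (Fintype.mem_piFinset.mp (hmem k)) a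
  -- Conjunct 2
  have conj2 : ∀ k k' : Fin l.length, k < k' →
      ((Finset.univ \ copyVerts (C k)) ∩ edgeVerts (l.get k')).Nonempty := by
    intro k k' h
    obtain ⟨j, hj⟩ : ∃ j, l.get k' j ∉ C k j := by
      by_contra hcon
      push_neg at hcon
      exact hnotin k k' h (Fintype.mem_piFinset.mpr hcon)
    refine ⟨(j, l.get k' j), ?_⟩
    rw [Finset.mem_inter, Finset.mem_sdiff, mem_copyVerts, mem_edgeVerts]
    exact ⟨⟨mem_univ _, hj⟩, rfl⟩
  -- Conjunct 3
  have conj3 : ∀ k j, (edgeVerts (l.get k) ∩ classV n d j).card = 1 := by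
    intro k j
    have hset : edgeVerts (l.get k) ∩ classV n d j = {(j, l.get k j)} := by
      ext ⟨a, b⟩
      rw [Finset.mem_inter, mem_edgeVerts, mem_classV, mem_singleton, Prod.mk.injEq]
      constructor
      · rintro ⟨hb, rfl⟩
        exact ⟨rfl, hb.symm⟩
      · rintro ⟨rfl, rfl⟩
        exact ⟨rfl, rfl⟩
    rw [hset, card_singleton]
  -- Conjunct 4
  have conj4 : ∀ k, ∃ π : Equiv.Perm (Fin d), ∀ j,
      ((Finset.univ \ copyVerts (C k)) ∩ classV n d j).card = n - p (π j) := by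
    intro k
    obtain ⟨π, hπ⟩ := hbox k
    refine ⟨π, fun j => ?_⟩
    have hset : (Finset.univ \ copyVerts (C k)) ∩ classV n d j
        = (Finset.univ \ C k j).image fun x => (j, x) := by
      ext ⟨a, b⟩
      rw [Finset.mem_inter, Finset.mem_sdiff, mem_copyVerts, mem_classV]
      simp only [mem_image, Finset.mem_sdiff, mem_univ, true_and, Prod.mk.injEq]
      constructor
      · rintro ⟨hb, rfl⟩
        exact ⟨b, hb, rfl, rfl⟩
      · rintro ⟨x, hx, rfl, rfl⟩
        exact ⟨hx, rfl⟩
    rw [hset, Finset.card_image_of_injective _ (fun x y h => (Prod.ext_iff.mp h).2),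
      Finset.card_sdiff_of_subset (subset_univ _), card_univ, Fintype.card_fin, hπ j]
  -- The counting bound
  set A := Finset.univ.sup (fun i => n - p i) with hA
  set M' := (Fintype.piFinset fun _ : Fin d => Finset.range (A + 1)).filter
      (fun m : Fin d → ℕ => ∃ π : Equiv.Perm (Fin d), ∀ i, m i ≤ n - p (π i)) with hM'
  set φ : (Fin d → ℕ) → ((Fin d → Fin n) → ℚ) :=
    fun m x => ∏ j, ((x j : ℕ) : ℚ) ^ m j with hφ
  set Φ : Finset ((Fin d → Fin n) → ℚ) := M'.image φ with hΦ
  set W := Submodule.span ℚ (↑Φ : Set ((Fin d → Fin n) → ℚ)) with hW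
  set v : Fin l.length → (Fin d → Fin n) → ℚ :=
    fun k x => ∏ j, ∏ c ∈ (Finset.univ \ C k j), (((x j : ℕ) : ℚ) - ((c : ℕ) : ℚ)) with hv
  have hvW : ∀ k, v k ∈ W := by
    intro k
    obtain ⟨π, hπ⟩ := hbox k
    set P : Fin d → Polynomial ℚ :=
      fun j => ∏ c ∈ (Finset.univ \ C k j), (Polynomial.X - Polynomial.C ((c : ℕ) : ℚ)) with hP
    have hmonic : ∀ j, ∀ c ∈ (Finset.univ \ C k j),
        (Polynomial.X - Polynomial.C ((c : ℕ) : ℚ)).Monic :=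
      fun _ c _ => Polynomial.monic_X_sub_C _
    have hPdeg : ∀ j, (P j).natDegree = n - p (π j) := by
      intro j
      rw [hP]
      rw [Polynomial.natDegree_prod_of_monic _ _ (hmonic j)]
      simp only [Polynomial.natDegree_X_sub_C]
      rw [Finset.sum_const, smul_eq_mul, mul_one,
        Finset.card_sdiff_of_subset (subset_univ _), card_univ, Fintype.card_fin, hπ j]
    have hveq : v k = ∑ m ∈ Fintype.piFinset (fun j => Finset.range (n - p (π j) + 1)),
        (∏ j, (P j).coeff (m j)) • φ m := by
      funext x
      rw [Finset.sum_apply]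
      simp only [Pi.smul_apply, smul_eq_mul]
      show (∏ j, ∏ c ∈ (Finset.univ \ C k j), (((x j : ℕ) : ℚ) - ((c : ℕ) : ℚ))) = _
      have h1 : ∀ j, ∏ c ∈ (Finset.univ \ C k j), (((x j : ℕ) : ℚ) - ((c : ℕ) : ℚ))
          = (P j).eval ((x j : ℕ) : ℚ) := by
        intro j; rw [hP]; simp [Polynomial.eval_prod]
      rw [Finset.prod_congr rfl fun j _ => h1 j]
      have h2 : ∀ j, (P j).eval ((x j : ℕ) : ℚ)
          = ∑ m ∈ Finset.range (n - p (π j) + 1), (P j).coeff m * ((x j : ℕ) : ℚ) ^ m := by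
        intro j
        exact Polynomial.eval_eq_sum_range' (by rw [hPdeg j]; exact Nat.lt_succ_self _) _
      rw [Finset.prod_congr rfl fun j _ => h2 j, Finset.prod_univ_sum]
      refine Finset.sum_congr rfl fun m hm => ?_
      rw [Finset.prod_mul_distrib]
    rw [hveq]
    apply Submodule.sum_mem
    intro m hm
    apply Submodule.smul_mem
    apply Submodule.subset_span
    rw [Finset.mem_coe, hΦ]
    refine mem_image.mpr ⟨m, ?_, rfl⟩
    rw [hM', mem_filter]
    rw [Fintype.mem_piFinset] at hm
    constructor
    · rw [Fintype.mem_piFinset]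
      intro i
      rw [mem_range]
      have h1 := mem_range.mp (hm i)
      have h2 : n - p (π i) ≤ A := by
        rw [hA]
        exact Finset.le_sup (f := fun i => n - p i) (mem_univ (π i))
      omega
    · exact ⟨π, fun i => by have := mem_range.mp (hm i); omega⟩
  have hdiag : ∀ k, v k (l.get k) ≠ 0 := by
    intro k
    apply Finset.prod_ne_zero_iff.mpr
    intro j _
    apply Finset.prod_ne_zero_iff.mpr
    intro c hc
    rw [Finset.mem_sdiff] at hc
    have hne : l.get k j ≠ c := by
      intro h; exact hc.2 (h ▸ (Fintype.mem_piFinset.mp (hmem k)) j)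
    have hne2 : ((l.get k j : ℕ) : ℚ) ≠ ((c : ℕ) : ℚ) := by
      simpa [Nat.cast_inj, Fin.val_inj] using hne
    exact sub_ne_zero_of_ne hne2
  have hzero : ∀ k k' : Fin l.length, k < k' → v k (l.get k') = 0 := by
    intro k k' h
    obtain ⟨j, hj⟩ : ∃ j, l.get k' j ∉ C k j := by
      by_contra hcon
      push_neg at hcon
      exact hnotin k k' h (Fintype.mem_piFinset.mpr hcon)
    apply Finset.prod_eq_zero (mem_univ j)
    apply Finset.prod_eq_zero (Finset.mem_sdiff.mpr ⟨mem_univ _, hj⟩)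
    exact sub_self _
  have hli : LinearIndependent ℚ v := li_triangular v l.get hdiag hzero
  have hcard : l.length ≤ M'.card := by
    let u : Fin l.length → W := fun k => ⟨v k, hvW k⟩
    have hliu : LinearIndependent ℚ u := by
      apply LinearIndependent.of_comp W.subtype
      convert hli
      rfl
    haveI : FiniteDimensional ℚ W := FiniteDimensional.span_finset ℚ Φ
    have h1 : Fintype.card (Fin l.length) ≤ Module.finrank ℚ W :=
      hliu.fintype_card_le_finrank
    have h2 : Module.finrank ℚ W ≤ Φ.card := finrank_span_finset_le_card Φ
    have h3 : Φ.card ≤ M'.card := Finset.card_image_le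
    have := le_trans h1 (le_trans h2 h3)
    simpa using this
  have hQQ : l.length ≤ QQ d (fun i => n - p i) (fun _ => 1) := by
    rw [← QQ_one_eq d (fun i => n - p i)]
    exact le_trans hcard (le_of_eq rfl)
  have htot : E.card + l.length = n ^ d := by
    have hcompl : l.toFinset = Eᶜ := by
      ext e
      simp [henum e, List.mem_toFinset, Finset.mem_compl]
    have h := Finset.card_add_card_compl E
    rw [← hcompl, List.toFinset_card_of_nodup hnd, Fintype.card_fun, Fintype.card_fin,
      Fintype.card_fin] at h
    exact h
  exact ⟨conj1, conj2, conj3, conj4, by omega⟩
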